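/- Let G and H be groups and assume G is isoclinic to H. If G has abelian centralizers, then H has abelian centralizers. -/

import Mathlib

open scoped commutatorElement

theorem mem_commutator_of {G : Type} [Group G] (g₁ g₂ : G) : ⁅g₁, g₂⁆ ∈ commutator G := by
  rw [commutator_def]
  exact Subgroup.commutator_mem_commutator (Subgroup.mem_top _) (Subgroup.mem_top _)

/-- Two groups are isoclinic. -/
def IsIsoclinic (G H : Type) [Group G] [Group H] : Prop :=
  ∃ (ζ : (G ⧸ Subgroup.center G) ≃* (H ⧸ Subgroup.center H))
    (η : (commutator G) ≃* (commutator H)),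
    ∀ (g₁ g₂ : G) (h₁ h₂ : H),
      ζ ((g₁ : G) : G ⧸ Subgroup.center G) = ((h₁ : H) : H ⧸ Subgroup.center H) →
      ζ ((g₂ : G) : G ⧸ Subgroup.center G) = ((h₂ : H) : H ⧸ Subgroup.center H) →
      η ⟨⁅g₁, g₂⁆, mem_commutator_of g₁ g₂⟩ = ⟨⁅h₁, h₂⁆, mem_commutator_of h₁ h₂⟩

/-- A group has abelian centralizers if the centralizer of every non-central element
is abelian. -/
def HasAbelianCentralizers (G : Type) [Group G] : Prop :=
  ∀ x : G, x ∉ Subgroup.center G →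
    ∀ a ∈ Subgroup.centralizer {x}, ∀ b ∈ Subgroup.centralizer {x}, a * b = b * a

theorem stmt2 (G H : Type) [Group G] [Group H] (hGH : IsIsoclinic G H)
    (hG : HasAbelianCentralizers G) : HasAbelianCentralizers H := by
  obtain ⟨ζ, η, hcomm⟩ := hGH
  intro x hx a ha b hb
  -- pick preimages
  obtain ⟨gx', hgx'⟩ := ζ.surjective ((x : H ⧸ Subgroup.center H))
  obtain ⟨gx, rfl⟩ := QuotientGroup.mk_surjective gx'
  obtain ⟨ga', hga'⟩ := ζ.surjective ((a : H ⧸ Subgroup.center H))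
  obtain ⟨ga, rfl⟩ := QuotientGroup.mk_surjective ga'
  obtain ⟨gb', hgb'⟩ := ζ.surjective ((b : H ⧸ Subgroup.center H))
  obtain ⟨gb, rfl⟩ := QuotientGroup.mk_surjective gb'
  -- gx noncentral
  have hgx : gx ∉ Subgroup.center G := by
    intro h
    apply hx
    rw [← QuotientGroup.eq_one_iff] at h ⊢
    rw [← hgx', h, map_one]
  -- commutator transfer
  have key : ∀ g : G, ∀ h : H, ζ ((g : G ⧸ Subgroup.center G)) = (h : H ⧸ Subgroup.center H) →
      (⁅gx, g⁆ = 1 ↔ ⁅x, h⁆ = 1) := by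
    intro g h hgh
    have := hcomm gx g x h hgx' hgh
    constructor
    · intro h1
      have h2 : (⟨⁅x, h⁆, mem_commutator_of x h⟩ : commutator H) = 1 := by
        rw [← this, show (⟨⁅gx, g⁆, mem_commutator_of gx g⟩ : commutator G) = 1 from
          Subtype.ext h1, map_one]
      exact congrArg Subtype.val h2
    · intro h1
      have h2 : η ⟨⁅gx, g⁆, mem_commutator_of gx g⟩ = 1 := by
        rw [this]; exact Subtype.ext h1
      have h3 : (⟨⁅gx, g⁆, mem_commutator_of gx g⟩ : commutator G) = 1 :=
        η.injective (by rw [h2, map_one])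
      exact congrArg Subtype.val h3
  have hxa : x * a = a * x := (Subgroup.mem_centralizer_iff.mp ha) x rfl
  have hxb : x * b = b * x := (Subgroup.mem_centralizer_iff.mp hb) x rfl
  have hga2 : ⁅gx, ga⁆ = 1 := (key ga a hga').mpr
    (commutatorElement_eq_one_iff_mul_comm.mpr hxa)
  have hgb2 : ⁅gx, gb⁆ = 1 := (key gb b hgb').mpr
    (commutatorElement_eq_one_iff_mul_comm.mpr hxb)
  -- ga, gb in centralizer of gx
  have hga3 : ga ∈ Subgroup.centralizer {gx} := by
    rw [Subgroup.mem_centralizer_iff]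
    rintro y rfl
    exact commutatorElement_eq_one_iff_mul_comm.mp hga2
  have hgb3 : gb ∈ Subgroup.centralizer {gx} := by
    rw [Subgroup.mem_centralizer_iff]
    rintro y rfl
    exact commutatorElement_eq_one_iff_mul_comm.mp hgb2
  have hab : ⁅ga, gb⁆ = 1 := commutatorElement_eq_one_iff_mul_comm.mpr
    (hG gx hgx ga hga3 gb hgb3)
  -- transfer back
  have := hcomm ga gb a b hga' hgb'
  have h2 : (⟨⁅a, b⁆, mem_commutator_of a b⟩ : commutator H) = 1 := by
    rw [← this, show (⟨⁅ga, gb⁆, mem_commutator_of ga gb⟩ : commutator G) = 1 from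
      Subtype.ext hab, map_one]
  exact commutatorElement_eq_one_iff_mul_comm.mp (congrArg Subtype.val h2)
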